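/- arXiv:1001.4261 — 4 statements merged into one kernel-verified Lean document; each statement's English description precedes it below -/
import Mathlib

section
/- Let T be an invertible non-singular transformation of a probability space (X,B,P). Then ρ(P, P∘T^n) → 0 as n → ∞ if and only if the Radon–Nikodym derivatives (T^n)' = d(P∘T^n)/dP converge to 0 in P-measure. -/
open MeasureTheory Filter

/-- `P ∘ T^n`, the measure `A ↦ P (T^n '' A)`, for an invertible transformation `T`,
realized as the pushforward of `P` under `T⁻ⁿ = (T.symm)^[n]`. -/
noncomputable def compPow {X : Type*} [MeasurableSpace X]
    (P : Measure X) (T : X ≃ᵐ X) (n : ℕ) : Measure X :=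
  Measure.map (T.symm^[n]) P

theorem hellinger_tendsto_zero_iff_rnDeriv_tendstoInMeasure
    {X : Type*} [MeasurableSpace X] (P : Measure X) [IsProbabilityMeasure P]
    (T : X ≃ᵐ X)
    (hns : ∀ n : ℕ, compPow P T n ≪ P ∧ P ≪ compPow P T n) :
    Tendsto (fun n : ℕ =>
        ∫ x, Real.sqrt (((compPow P T n).rnDeriv P x).toReal) ∂P) atTop (nhds 0)
      ↔ TendstoInMeasure P
          (fun (n : ℕ) (x : X) => ((compPow P T n).rnDeriv P x).toReal) atTop 0 := by
  classical
  haveI hprob : ∀ n, IsProbabilityMeasure (compPow P T n) := fun n =>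
    Measure.isProbabilityMeasure_map (T.symm.measurable.iterate n).aemeasurable
  set f : ℕ → X → ℝ := fun n x => ((compPow P T n).rnDeriv P x).toReal with hfdef
  have hf_meas : ∀ n, Measurable (f n) := fun n =>
    (Measure.measurable_rnDeriv _ _).ennreal_toReal
  have hf_nonneg : ∀ n x, 0 ≤ f n x := fun n x => ENNReal.toReal_nonneg
  have hf_int : ∀ n, Integrable (f n) P := fun n =>
    Measure.integrable_toReal_rnDeriv
  have hf_int1 : ∀ n, ∫ x, f n x ∂P = 1 := by
    intro n
    rw [hfdef]
    simp only
    rw [Measure.integral_toReal_rnDeriv (hns n).1]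
    simp
  have hsqrt_int : ∀ n, Integrable (fun x => Real.sqrt (f n x)) P := by
    intro n
    refine ((integrable_const (1:ℝ)).add (hf_int n)).mono'
      (hf_meas n).sqrt.aestronglyMeasurable ?_
    filter_upwards with x
    rw [Real.norm_eq_abs, abs_of_nonneg (Real.sqrt_nonneg _)]
    simp only [Pi.add_apply]
    nlinarith [Real.sq_sqrt (hf_nonneg n x), Real.sqrt_nonneg (f n x)]
  have hset : ∀ n (ε : ℝ), {x | ε ≤ dist (f n x) 0} = {x | ε ≤ f n x} := by
    intro n ε
    ext x
    simp [dist_zero_right, Real.norm_eq_abs, abs_of_nonneg (hf_nonneg n x)]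
  constructor
  · -- Hellinger → convergence in measure
    rw [tendstoInMeasure_iff_dist]
    intro h ε hε
    have hset2 : ∀ n, {x | ε ≤ f n x} = {x | Real.sqrt ε ≤ Real.sqrt (f n x)} := by
      intro n
      ext x
      simp only [Set.mem_setOf_eq, Real.sqrt_le_sqrt_iff (hf_nonneg n x)]
    have hbound : ∀ n, (P {x | ε ≤ dist (f n x) 0}).toReal
        ≤ (∫ x, Real.sqrt (f n x) ∂P) / Real.sqrt ε := by
      intro n
      rw [hset n ε, hset2 n, div_eq_inv_mul, ← mul_le_mul_iff_right₀ (Real.sqrt_pos.2 hε),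
        ← mul_assoc, mul_inv_cancel₀ (Real.sqrt_pos.2 hε).ne', one_mul]
      exact mul_meas_ge_le_integral_of_nonneg
        (Filter.Eventually.of_forall fun x => Real.sqrt_nonneg _) (hsqrt_int n) _
    have htoReal : Tendsto (fun n => (P {x | ε ≤ dist (f n x) 0}).toReal) atTop (nhds 0) := by
      refine squeeze_zero (fun n => ENNReal.toReal_nonneg) hbound ?_
      simpa using h.div_const (Real.sqrt ε)
    rw [← ENNReal.toReal_zero,
      ENNReal.tendsto_toReal_iff (fun n => measure_ne_top P _) ENNReal.zero_ne_top] at htoReal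
    exact htoReal
  · -- convergence in measure → Hellinger
    rw [tendstoInMeasure_iff_dist]
    intro h
    rw [Metric.tendsto_atTop]
    intro δ hδ
    set ε : ℝ := (δ / 3) ^ 2 with hεdef
    have hε : 0 < ε := by positivity
    have hmeas0 : Tendsto (fun n => (P {x | ε ≤ dist (f n x) 0}).toReal) atTop (nhds 0) := by
      rw [← ENNReal.toReal_zero]
      exact (ENNReal.tendsto_toReal ENNReal.zero_ne_top).comp (h ε hε)
    have hev : ∀ᶠ n in atTop, (P {x | ε ≤ dist (f n x) 0}).toReal < δ ^ 2 / 9 := by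
      have : (0:ℝ) < δ ^ 2 / 9 := by positivity
      exact (hmeas0.eventually (eventually_lt_nhds this)).mono (fun n hn => hn)
    obtain ⟨N, hN⟩ := hev.exists_forall_of_atTop
    refine ⟨N, fun n hn => ?_⟩
    have hPn : (P {x | ε ≤ f n x}).toReal < δ ^ 2 / 9 := by
      rw [← hset n ε]; exact hN n hn
    set A : Set X := {x | ε ≤ f n x} with hAdef
    have hAmeas : MeasurableSet A := measurableSet_le measurable_const (hf_meas n)
    -- the dominating function
    set g : X → ℝ := fun x => δ / 3 + A.indicator (fun _ => 3 / δ) x + f n x * (δ / 3)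
      with hgdef
    have hg1 : Integrable (fun x => δ / 3 + A.indicator (fun _ => (3:ℝ) / δ) x) P :=
      (integrable_const _).add ((integrable_const _).indicator hAmeas)
    have hg2 : Integrable (fun x => f n x * (δ / 3)) P := (hf_int n).mul_const _
    have hg_int : Integrable g P := hg1.add hg2
    have hle : ∀ x, Real.sqrt (f n x) ≤ g x := by
      intro x
      have hind : (0:ℝ) ≤ A.indicator (fun _ => 3 / δ) x :=
        Set.indicator_nonneg (fun _ _ => by positivity) x
      by_cases hx : ε ≤ f n x
      · have hxA : A.indicator (fun _ => 3 / δ) x = 3 / δ := Set.indicator_of_mem (show x ∈ A from hx) _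
        by_cases hs : Real.sqrt (f n x) ≤ 3 / δ
        · rw [hgdef]
          simp only [hxA]
          nlinarith [hf_nonneg n x]
        · push_neg at hs
          have hsq : Real.sqrt (f n x) ^ 2 = f n x := Real.sq_sqrt (hf_nonneg n x)
          rw [hgdef]
          simp only [hxA]
          have h3δ : (0:ℝ) < 3 / δ := by positivity
          have h1 : (1:ℝ) < δ / 3 * Real.sqrt (f n x) := by
            rw [show (1:ℝ) = δ / 3 * (3 / δ) by field_simp]
            exact mul_lt_mul_of_pos_left hs (by positivity)
          nlinarith [mul_pos (lt_trans h3δ hs) (sub_pos.2 h1), hsq,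
            Real.sqrt_nonneg (f n x)]
      · push_neg at hx
        have : Real.sqrt (f n x) ≤ δ / 3 := by
          have := Real.sqrt_le_sqrt hx.le
          rwa [hεdef, Real.sqrt_sq (by positivity : (0:ℝ) ≤ δ / 3)] at this
        rw [hgdef]
        nlinarith [hf_nonneg n x]
    have hint_le : ∫ x, Real.sqrt (f n x) ∂P ≤ ∫ x, g x ∂P :=
      integral_mono (hsqrt_int n) hg_int hle
    have hgval : ∫ x, g x ∂P
        = δ / 3 + (P A).toReal * (3 / δ) + (∫ x, f n x ∂P) * (δ / 3) := by
      rw [hgdef]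
      rw [integral_add hg1 hg2,
        integral_add (integrable_const _) ((integrable_const _).indicator hAmeas),
        integral_indicator_const _ hAmeas, integral_const, integral_mul_const]
      simp [smul_eq_mul, measure_univ, mul_comm, Measure.real]
    have hfin : ∫ x, Real.sqrt (f n x) ∂P < δ := by
      have : ∫ x, g x ∂P < δ := by
        rw [hgval, hf_int1 n, one_mul]
        have h1 : (P A).toReal * (3 / δ) < δ / 3 := by
          rw [hAdef]
          calc (P {x | ε ≤ f n x}).toReal * (3 / δ) < (δ ^ 2 / 9) * (3 / δ) := by
                apply mul_lt_mul_of_pos_right hPn (by positivity)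
            _ = δ / 3 := by field_simp; ring
        linarith
      exact lt_of_le_of_lt hint_le this
    have : dist (∫ x, Real.sqrt (f n x) ∂P) 0 < δ := by
      rw [Real.dist_eq, sub_zero, abs_of_nonneg (integral_nonneg fun x => Real.sqrt_nonneg _)]
      exact hfin
    exact this
end

section
/- Let T be an invertible non-singular transformation of (X,B,P) with unitary Koopman operator U f = √(T')·(f∘T) on L²(X,P). If ρ(P, P∘T^n) → 0, then for every f ∈ L²(X,P), ⟨f, U^n f⟩ = ∫ f·U^n f dP → 0 as n → ∞. -/
open MeasureTheory Filter
open scoped ENNReal NNReal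

section Aux

variable {X : Type*} [MeasurableSpace X] (P : Measure X) [IsProbabilityMeasure P] (T : X ≃ᵐ X)

lemma compPow_prob (n : ℕ) : IsProbabilityMeasure (compPow P T n) := by
  unfold compPow
  exact Measure.isProbabilityMeasure_map (T.symm.measurable.iterate n).aemeasurable

lemma map_iter_compPow (n : ℕ) : Measure.map ((⇑T)^[n]) (compPow P T n) = P := by
  unfold compPow
  rw [Measure.map_map (T.measurable.iterate n) (T.symm.measurable.iterate n)]
  have h : (⇑T)^[n] ∘ (⇑T.symm)^[n] = id := by
    funext x
    exact Function.LeftInverse.iterate T.apply_symm_apply n x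
  rw [h, Measure.map_id]

/-- a.e.-measurability of `f ∘ T^[n]` w.r.t. `P`. -/
lemma aemeas_comp (n : ℕ) (hns : P ≪ compPow P T n) {f : X → ℝ}
    (hf : AEMeasurable f P) : AEMeasurable (fun x => f ((⇑T)^[n] x)) P := by
  have h1 : AEMeasurable f (Measure.map ((⇑T)^[n]) (compPow P T n)) := by
    rw [map_iter_compPow]; exact hf
  exact (h1.comp_measurable (T.measurable.iterate n)).mono_ac hns

/-- key isometry: the Koopman operator preserves the L² norm. -/
lemma eLpNorm_koopman (n : ℕ) (hns : compPow P T n ≪ P ∧ P ≪ compPow P T n)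
    {f : X → ℝ} (hf : MemLp f 2 P) :
    MemLp (fun x => Real.sqrt (((compPow P T n).rnDeriv P x).toReal) * f ((⇑T)^[n] x)) 2 P ∧
    eLpNorm (fun x => Real.sqrt (((compPow P T n).rnDeriv P x).toReal) * f ((⇑T)^[n] x)) 2 P
      = eLpNorm f 2 P := by
  have := compPow_prob P T n
  set D : X → ℝ≥0∞ := (compPow P T n).rnDeriv P with hD
  have hDmeas : Measurable D := Measure.measurable_rnDeriv _ _
  have hfT : AEMeasurable (fun x => f ((⇑T)^[n] x)) P := aemeas_comp P T n hns.2 hf.1.aemeasurable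
  have hsm : AEStronglyMeasurable
      (fun x => Real.sqrt ((D x).toReal) * f ((⇑T)^[n] x)) P :=
    (hDmeas.ennreal_toReal.sqrt.aemeasurable.mul hfT).aestronglyMeasurable
  -- pointwise a.e. identity for nnnorms
  have hae : ∀ᵐ x ∂P, (‖Real.sqrt ((D x).toReal) * f ((⇑T)^[n] x)‖₊ : ℝ≥0∞) ^ (2:ℝ)
      = D x * (‖f ((⇑T)^[n] x)‖₊ : ℝ≥0∞) ^ (2:ℝ) := by
    filter_upwards [Measure.rnDeriv_lt_top (compPow P T n) P] with x hx
    rw [nnnorm_mul, ENNReal.coe_mul,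
      ENNReal.mul_rpow_of_nonneg _ _ (by norm_num : (0:ℝ) ≤ 2)]
    congr 1
    have h0 : (0:ℝ) ≤ Real.sqrt ((D x).toReal) := Real.sqrt_nonneg _
    rw [← ENNReal.ofReal_coe_nnreal, coe_nnnorm, Real.norm_of_nonneg h0,
      ENNReal.ofReal_rpow_of_nonneg h0 (by norm_num : (0:ℝ) ≤ 2),
      show (Real.sqrt ((D x).toReal)) ^ (2:ℝ) = (D x).toReal by
        rw [Real.rpow_two, Real.sq_sqrt ENNReal.toReal_nonneg]]
    exact ENNReal.ofReal_toReal hx.ne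
  have hfT2 : AEMeasurable (fun x => (‖f ((⇑T)^[n] x)‖₊ : ℝ≥0∞) ^ (2:ℝ)) P :=
    (hfT.enorm).pow_const _
  have hlin : ∫⁻ x, (‖Real.sqrt ((D x).toReal) * f ((⇑T)^[n] x)‖₊ : ℝ≥0∞) ^ (2:ℝ) ∂P
      = ∫⁻ x, (‖f x‖₊ : ℝ≥0∞) ^ (2:ℝ) ∂P := by
    rw [lintegral_congr_ae hae,
      lintegral_rnDeriv_mul hns.1 hfT2]
    have : ∫⁻ x, (‖f ((⇑T)^[n] x)‖₊ : ℝ≥0∞) ^ (2:ℝ) ∂(compPow P T n)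
        = ∫⁻ x, (‖f x‖₊ : ℝ≥0∞) ^ (2:ℝ) ∂(Measure.map ((⇑T)^[n]) (compPow P T n)) := by
      rw [lintegral_map' (by rw [map_iter_compPow]; exact hf.1.aemeasurable.enorm.pow_const _)
        (T.measurable.iterate n).aemeasurable]
    rw [this, map_iter_compPow]
  have heq : eLpNorm (fun x => Real.sqrt ((D x).toReal) * f ((⇑T)^[n] x)) 2 P
      = eLpNorm f 2 P := by
    rw [eLpNorm_eq_lintegral_rpow_enorm_toReal (by norm_num) (by norm_num),
      eLpNorm_eq_lintegral_rpow_enorm_toReal (by norm_num) (by norm_num)]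
    simp only [ENNReal.toReal_ofNat, enorm_eq_nnnorm]
    rw [hlin]
  exact ⟨⟨hsm, heq ▸ hf.2⟩, heq⟩

/-- product of two L² functions is integrable -/
lemma integrable_mul2 {f g : X → ℝ} (hf : MemLp f 2 P) (hg : MemLp g 2 P) :
    Integrable (fun x => f x * g x) P := by
  rw [← memLp_one_iff_integrable]
  have h : (1:ℝ≥0∞) / 1 = 1 / 2 + 1 / 2 := by
    rw [ENNReal.add_halves, div_one]
  exact MemLp.smul hg hf

/-- Cauchy-Schwarz -/
lemma cauchy_schwarz {f g : X → ℝ} (hf : MemLp f 2 P) (hg : MemLp g 2 P) :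
    |∫ x, f x * g x ∂P| ≤ (eLpNorm f 2 P).toReal * (eLpNorm g 2 P).toReal := by
  have h1 : |∫ x, f x * g x ∂P| ≤ ∫ x, ‖f x * g x‖ ∂P := by
    simpa using norm_integral_le_integral_norm (fun x => f x * g x)
  have h2 : ∫ x, ‖f x * g x‖ ∂P = (eLpNorm (fun x => f x * g x) 1 P).toReal := by
    rw [integral_norm_eq_lintegral_enorm (integrable_mul2 P hf hg).aestronglyMeasurable,
      eLpNorm_one_eq_lintegral_enorm]
  have h3 : eLpNorm (fun x => f x * g x) 1 P ≤ eLpNorm f 2 P * eLpNorm g 2 P :=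
    by simpa using eLpNorm_le_eLpNorm_mul_eLpNorm'_of_norm (p := 2) (q := 2) hf.1 hg.1 (· * ·) 1
        (Filter.Eventually.of_forall fun x => by simp [norm_mul])
  calc |∫ x, f x * g x ∂P| ≤ (eLpNorm (fun x => f x * g x) 1 P).toReal := h2 ▸ h1
    _ ≤ (eLpNorm f 2 P * eLpNorm g 2 P).toReal :=
        ENNReal.toReal_mono (ENNReal.mul_ne_top hf.2.ne hg.2.ne) h3
    _ = _ := ENNReal.toReal_mul

end Aux

theorem koopman_mixing_of_hellinger_tendsto_zero
    {X : Type*} [MeasurableSpace X] (P : Measure X) [IsProbabilityMeasure P]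
    (T : X ≃ᵐ X)
    (hns : ∀ n : ℕ, compPow P T n ≪ P ∧ P ≪ compPow P T n)
    (hρ : Tendsto (fun n : ℕ =>
        ∫ x, Real.sqrt (((compPow P T n).rnDeriv P x).toReal) ∂P) atTop (nhds 0)) :
    ∀ f : X → ℝ, MemLp f 2 P →
      Tendsto (fun n : ℕ =>
          ∫ x, f x * (Real.sqrt (((compPow P T n).rnDeriv P x).toReal) * f ((⇑T)^[n] x)) ∂P)
        atTop (nhds 0) := by
  intro f hf
  rw [NormedAddCommGroup.tendsto_nhds_zero]
  intro ε hε
  set a := (eLpNorm f 2 P).toReal with ha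
  have ha0 : 0 ≤ a := ENNReal.toReal_nonneg
  set δ : ℝ := min 1 (ε / (2 * (2 * a + 1))) with hδdef
  have hδpos : 0 < δ := lt_min one_pos (div_pos hε (by positivity))
  have hδ1 : δ ≤ 1 := min_le_left _ _
  have hδ2 : δ * (2 * (2 * a + 1)) ≤ ε := by
    have h := min_le_right (1:ℝ) (ε / (2 * (2 * a + 1)))
    rw [le_div_iff₀ (by positivity : (0:ℝ) < 2 * (2 * a + 1))] at h
    exact h
  obtain ⟨s, hs, hsmem⟩ := hf.exists_simpleFunc_eLpNorm_sub_lt (by norm_num)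
      (ENNReal.ofReal_pos.mpr hδpos).ne'
  set g : X → ℝ := f - ⇑s with hgdef
  have hgmem : MemLp g 2 P := hf.sub hsmem
  set b := (eLpNorm g 2 P).toReal with hbdef
  have hb : b < δ := ENNReal.toReal_lt_of_lt_ofReal hs
  have hb0 : 0 ≤ b := ENNReal.toReal_nonneg
  set c := (eLpNorm (⇑s) 2 P).toReal with hcdef
  have hc0 : 0 ≤ c := ENNReal.toReal_nonneg
  have hc : c ≤ a + b := by
    have h1 : eLpNorm (⇑s) 2 P ≤ eLpNorm f 2 P + eLpNorm g 2 P := by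
      have : (⇑s : X → ℝ) = f - g := by
        funext x; simp [hgdef]
      rw [this]
      exact eLpNorm_sub_le hf.1 hgmem.1 one_le_two
    calc c ≤ (eLpNorm f 2 P + eLpNorm g 2 P).toReal :=
          ENNReal.toReal_mono (ENNReal.add_ne_top.mpr ⟨hf.2.ne, hgmem.2.ne⟩) h1
      _ = a + b := ENNReal.toReal_add hf.2.ne hgmem.2.ne
  have hcle : c ≤ a + 1 := hc.trans (by linarith)
  obtain ⟨C, hC⟩ := s.exists_forall_norm_le
  have hX : Nonempty X := by
    by_contra h
    have h2 : P Set.univ = 1 := measure_univ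
    rw [Set.univ_eq_empty_iff.mpr (not_nonempty_iff.mp h), measure_empty] at h2
    exact zero_ne_one h2
  have hC0 : 0 ≤ C := le_trans (norm_nonneg _) (hC hX.some)
  -- eventually the simple-function term is small
  have hev : ∀ᶠ n : ℕ in atTop,
      C ^ 2 * ∫ x, Real.sqrt (((compPow P T n).rnDeriv P x).toReal) ∂P < ε / 2 := by
    have h := hρ.const_mul (C ^ 2)
    rw [mul_zero] at h
    exact h.eventually_lt_const (by positivity)
  filter_upwards [hev] with n hn
  have hprob := compPow_prob P T n
  -- the three Koopman images
  obtain ⟨humem, hunorm⟩ := eLpNorm_koopman P T n (hns n) hf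
  obtain ⟨hvmem, hvnorm⟩ := eLpNorm_koopman P T n (hns n) hsmem
  obtain ⟨hwmem, hwnorm⟩ := eLpNorm_koopman P T n (hns n) hgmem
  set u : X → ℝ := fun x => Real.sqrt (((compPow P T n).rnDeriv P x).toReal) * f ((⇑T)^[n] x)
    with hudef
  set v : X → ℝ := fun x => Real.sqrt (((compPow P T n).rnDeriv P x).toReal) * s ((⇑T)^[n] x)
    with hvdef
  set w : X → ℝ := fun x => Real.sqrt (((compPow P T n).rnDeriv P x).toReal) * g ((⇑T)^[n] x)
    with hwdef
  -- integrability of products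
  have hsv : Integrable (fun x => s x * v x) P := integrable_mul2 P hsmem hvmem
  have hgu : Integrable (fun x => g x * u x) P := integrable_mul2 P hgmem humem
  have hsw : Integrable (fun x => s x * w x) P := integrable_mul2 P hsmem hwmem
  -- decomposition
  have hdecomp : ∫ x, f x * u x ∂P
      = (∫ x, s x * v x ∂P) + ((∫ x, g x * u x ∂P) + (∫ x, s x * w x ∂P)) := by
    have hsum : Integrable (fun x => g x * u x + s x * w x) P := hgu.add hsw
    rw [← integral_add hgu hsw, ← integral_add hsv hsum]
    refine integral_congr_ae (Filter.Eventually.of_forall fun x => ?_)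
    simp only [hudef, hvdef, hwdef, hgdef, Pi.sub_apply]
    ring
  -- bound the simple-function term
  have hρn0 : 0 ≤ ∫ x, Real.sqrt (((compPow P T n).rnDeriv P x).toReal) ∂P :=
    integral_nonneg fun x => Real.sqrt_nonneg _
  have hsqrtint : Integrable (fun x => Real.sqrt (((compPow P T n).rnDeriv P x).toReal)) P := by
    have hint := Measure.integrable_toReal_rnDeriv (μ := compPow P T n) (ν := P)
    refine (hint.add (integrable_const 1)).mono
      ((Measure.measurable_rnDeriv _ _).ennreal_toReal.sqrt.aestronglyMeasurable)
      (Filter.Eventually.of_forall fun x => ?_)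
    have h0 : (0:ℝ) ≤ (((compPow P T n).rnDeriv P x).toReal) := ENNReal.toReal_nonneg
    rw [Real.norm_of_nonneg (Real.sqrt_nonneg _), Pi.add_apply,
      Real.norm_of_nonneg (by positivity)]
    nlinarith [Real.sq_sqrt h0, Real.sqrt_nonneg (((compPow P T n).rnDeriv P x).toReal)]
  have hSB : |∫ x, s x * v x ∂P|
      ≤ C ^ 2 * ∫ x, Real.sqrt (((compPow P T n).rnDeriv P x).toReal) ∂P := by
    have h1 : |∫ x, s x * v x ∂P| ≤ ∫ x, ‖s x * v x‖ ∂P := by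
      simpa using norm_integral_le_integral_norm (fun x => s x * v x)
    have h2 : ∫ x, ‖s x * v x‖ ∂P
        ≤ ∫ x, C ^ 2 * Real.sqrt (((compPow P T n).rnDeriv P x).toReal) ∂P := by
      refine integral_mono_of_nonneg (Filter.Eventually.of_forall fun x => norm_nonneg _)
        (hsqrtint.const_mul _) (Filter.Eventually.of_forall fun x => ?_)
      simp only [hvdef, norm_mul]
      have hsq : (0:ℝ) ≤ Real.sqrt (((compPow P T n).rnDeriv P x).toReal) :=
        Real.sqrt_nonneg _
      rw [Real.norm_of_nonneg hsq]
      have h3 := hC x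
      have h4 := hC ((⇑T)^[n] x)
      have h5 : ‖s x‖ * (Real.sqrt (((compPow P T n).rnDeriv P x).toReal) * ‖s ((⇑T)^[n] x)‖)
          ≤ C * (Real.sqrt (((compPow P T n).rnDeriv P x).toReal) * C) :=
        mul_le_mul h3 (mul_le_mul_of_nonneg_left h4 hsq)
          (by positivity) hC0
      calc ‖s x‖ * (Real.sqrt (((compPow P T n).rnDeriv P x).toReal) * ‖s ((⇑T)^[n] x)‖)
          ≤ C * (Real.sqrt (((compPow P T n).rnDeriv P x).toReal) * C) := h5
        _ = C ^ 2 * Real.sqrt (((compPow P T n).rnDeriv P x).toReal) := by ring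
    rw [integral_const_mul] at h2
    exact h1.trans h2
  -- bound the error terms
  have hGU : |∫ x, g x * u x ∂P| ≤ b * a := by
    have h := cauchy_schwarz P hgmem humem
    rwa [hunorm] at h
  have hSW : |∫ x, s x * w x ∂P| ≤ c * b := by
    have h := cauchy_schwarz P hsmem hwmem
    rwa [hwnorm] at h
  have herr : b * a + c * b ≤ ε / 2 := by
    have h1 : b * a ≤ δ * a := mul_le_mul_of_nonneg_right hb.le ha0
    have h2 : c * b ≤ c * δ := mul_le_mul_of_nonneg_left hb.le hc0
    have h3 : c * δ ≤ (a + 1) * δ := mul_le_mul_of_nonneg_right hcle hδpos.le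
    nlinarith
  rw [Real.norm_eq_abs, hdecomp]
  calc |(∫ x, s x * v x ∂P) + ((∫ x, g x * u x ∂P) + (∫ x, s x * w x ∂P))|
      ≤ |∫ x, s x * v x ∂P| + (|∫ x, g x * u x ∂P| + |∫ x, s x * w x ∂P|) :=
        (abs_add_le _ _).trans (by gcongr; exact abs_add_le _ _)
    _ ≤ (C ^ 2 * ∫ x, Real.sqrt (((compPow P T n).rnDeriv P x).toReal) ∂P) + (b * a + c * b) :=
        by gcongr
    _ < ε / 2 + ε / 2 := by
        apply add_lt_add_of_lt_of_le hn herr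
    _ = ε := add_halves ε
end

section
/- Let P = ∏_{k∈ℤ} P_k be a non-singular product measure on {0,1}^ℤ such that lim_{k→−∞} P_k({0}) = p exists, and let Q = ∏_{k∈ℤ} μ_p be the i.i.d. (p, 1−p) product measure. If P ⊥ Q, then d(P, P∘T^n) → ∞ as n → ∞, i.e., the shift is NS zero-type. -/
open MeasureTheory Filter

/-- `μ` is the product measure on `{0,1}^ℤ` whose `k`-th factor gives mass `p k`
to `0` (here `false`) and `1 - p k` to `1` (here `true`). -/
def IsProductMeasure (μ : Measure (ℤ → Bool)) (p : ℤ → ℝ) : Prop :=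
  ∀ (F : Finset ℤ) (b : ℤ → Bool),
    μ {w | ∀ i ∈ F, w i = b i} =
      ∏ i ∈ F, ENNReal.ofReal (if b i = false then p i else 1 - p i)

/-- The Kakutani–Hellinger distance `d(P, P ∘ Tⁿ)`, as a value in `ℝ≥0∞`. -/
noncomputable def dShift (p : ℤ → ℝ) (n : ℕ) : ENNReal :=
  ∑' k : ℤ, ENNReal.ofReal
    ((Real.sqrt (p k) - Real.sqrt (p (k - n))) ^ 2 +
     (Real.sqrt (1 - p k) - Real.sqrt (1 - p (k - n))) ^ 2)

namespace ZTAux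

open ENNReal

/-- the summand of the Kakutani-Hellinger distance from `P` to the iid `(pl, 1-pl)` measure -/
noncomputable def f (p : ℤ → ℝ) (pl : ℝ) (k : ℤ) : ℝ :=
  (Real.sqrt (p k) - Real.sqrt pl) ^ 2 + (Real.sqrt (1 - p k) - Real.sqrt (1 - pl)) ^ 2

lemma f_nonneg (p : ℤ → ℝ) (pl : ℝ) (k : ℤ) : 0 ≤ f p pl k := by
  unfold f; positivity

lemma key2 (a b c d : ℝ) : (a^2 + c^2)/2 - (b^2 + d^2) ≤ (a-b)^2 + (c-d)^2 := by
  nlinarith [sq_nonneg (a - 2*b), sq_nonneg (c - 2*d)]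

lemma f_tendsto (p : ℤ → ℝ) (pl : ℝ) (hlim : Tendsto p atBot (nhds pl)) :
    Tendsto (f p pl) atBot (nhds 0) := by
  have hc : Continuous fun x : ℝ =>
      (Real.sqrt x - Real.sqrt pl) ^ 2 + (Real.sqrt (1 - x) - Real.sqrt (1 - pl)) ^ 2 := by
    fun_prop
  have := (hc.tendsto pl).comp hlim
  convert this using 2
  · rfl
  · simp

/-- Part A: if the Hellinger distance to the limit diverges, then the shift distances diverge. -/
lemma partA (p : ℤ → ℝ) (pl : ℝ)
    (hT : (∑' k : ℤ, ENNReal.ofReal (f p pl k)) = ⊤)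
    (hlim : Tendsto p atBot (nhds pl)) :
    Tendsto (fun n : ℕ => dShift p n) atTop (nhds ⊤) := by
  rw [ENNReal.tendsto_nhds_top_iff_nat]
  intro M
  have h1 : (ENNReal.ofReal (2*(M+1)) : ℝ≥0∞) < ∑' k : ℤ, ENNReal.ofReal (f p pl k) := by
    rw [hT]; exact ENNReal.ofReal_lt_top
  rw [ENNReal.tsum_eq_iSup_sum, lt_iSup_iff] at h1
  obtain ⟨F, hF⟩ := h1
  rw [← ENNReal.ofReal_sum_of_nonneg fun k _ => f_nonneg p pl k] at hF
  have hm : 2*((M:ℝ)+1) < ∑ k ∈ F, f p pl k := by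
    have := (ENNReal.ofReal_lt_ofReal_iff_of_nonneg (by positivity)).1 hF
    exact this
  set ε : ℝ := 1 / (F.card + 1) with hε
  have hεpos : 0 < ε := by positivity
  obtain ⟨K, hK⟩ : ∃ K : ℤ, ∀ j ≤ K, f p pl j ≤ ε := by
    have := (f_tendsto p pl hlim).eventually (ge_mem_nhds hεpos)
    exact eventually_atBot.1 this
  have hev : ∀ᶠ n : ℕ in atTop, ∀ k ∈ F, (k - (n:ℤ)) ≤ K := by
    rw [eventually_all_finset]
    intro k _
    filter_upwards [eventually_ge_atTop (k - K).toNat] with n hn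
    have : (k - K : ℤ) ≤ (n : ℤ) := le_trans (Int.self_le_toNat _) (by exact_mod_cast hn)
    omega
  filter_upwards [hev] with n hn
  have hpt : ∀ k ∈ F, f p pl k / 2 - f p pl (k - n) ≤
      (Real.sqrt (p k) - Real.sqrt (p (k - n))) ^ 2 +
      (Real.sqrt (1 - p k) - Real.sqrt (1 - p (k - n))) ^ 2 := by
    intro k _
    have h := key2 (Real.sqrt (p k) - Real.sqrt pl) (Real.sqrt (p (k-n)) - Real.sqrt pl)
      (Real.sqrt (1 - p k) - Real.sqrt (1-pl)) (Real.sqrt (1 - p (k-n)) - Real.sqrt (1-pl))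
    unfold f
    calc ((Real.sqrt (p k) - Real.sqrt pl) ^ 2 + (Real.sqrt (1 - p k) - Real.sqrt (1 - pl)) ^ 2)/2
          - ((Real.sqrt (p (k-n)) - Real.sqrt pl) ^ 2 + (Real.sqrt (1 - p (k-n)) - Real.sqrt (1 - pl)) ^ 2)
        ≤ ((Real.sqrt (p k) - Real.sqrt pl) - (Real.sqrt (p (k-n)) - Real.sqrt pl))^2
          + ((Real.sqrt (1 - p k) - Real.sqrt (1-pl)) - (Real.sqrt (1 - p (k-n)) - Real.sqrt (1-pl)))^2 := h
      _ = (Real.sqrt (p k) - Real.sqrt (p (k - n))) ^ 2 +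
          (Real.sqrt (1 - p k) - Real.sqrt (1 - p (k - n))) ^ 2 := by ring
  have hsum : (M:ℝ) < ∑ k ∈ F, ((Real.sqrt (p k) - Real.sqrt (p (k - n))) ^ 2 +
      (Real.sqrt (1 - p k) - Real.sqrt (1 - p (k - n))) ^ 2) := by
    have h2 : ∑ k ∈ F, (f p pl k / 2 - f p pl (k - n)) ≤ _ := Finset.sum_le_sum hpt
    have h3 : ∑ k ∈ F, f p pl (k - n) ≤ F.card * ε := by
      calc ∑ k ∈ F, f p pl (k - n) ≤ ∑ _k ∈ F, ε :=
            Finset.sum_le_sum fun k hk => hK _ (hn k hk)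
        _ = F.card * ε := by rw [Finset.sum_const, nsmul_eq_mul]
    have h4 : (F.card : ℝ) * ε < 1 := by
      rw [hε]
      rw [mul_one_div, div_lt_one (by positivity)]
      norm_num
    have h5 : ∑ k ∈ F, (f p pl k / 2 - f p pl (k - n)) =
        (∑ k ∈ F, f p pl k)/2 - ∑ k ∈ F, f p pl (k - n) := by
      rw [Finset.sum_sub_distrib, Finset.sum_div]
    nlinarith [h2, h3, h4, hm]
  calc (M : ℝ≥0∞) = ENNReal.ofReal M := by simp
    _ < ENNReal.ofReal (∑ k ∈ F, ((Real.sqrt (p k) - Real.sqrt (p (k - n))) ^ 2 +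
        (Real.sqrt (1 - p k) - Real.sqrt (1 - p (k - n))) ^ 2)) := by
        exact (ENNReal.ofReal_lt_ofReal_iff_of_nonneg (by positivity)).2 hsum
    _ = ∑ k ∈ F, ENNReal.ofReal ((Real.sqrt (p k) - Real.sqrt (p (k - n))) ^ 2 +
        (Real.sqrt (1 - p k) - Real.sqrt (1 - p (k - n))) ^ 2) :=
        ENNReal.ofReal_sum_of_nonneg fun k _ => by positivity
    _ ≤ dShift p n := ENNReal.sum_le_tsum F

/-! ### Part B: singularity forces the Hellinger distance to the limit to diverge -/

/-- restriction map to finitely many coordinates -/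
def res (F : Finset ℤ) (w : ℤ → Bool) : F → Bool := fun i => w i

/-- weight of one coordinate -/
noncomputable def wt (q : ℤ → ℝ) (i : ℤ) (v : Bool) : ℝ := if v = false then q i else 1 - q i

lemma measurable_res (F : Finset ℤ) : Measurable (res F) :=
  measurable_pi_iff.2 fun _ => measurable_pi_apply _

lemma measurableSet_res_preimage (F : Finset ℤ) (S : Set (F → Bool)) :
    MeasurableSet (res F ⁻¹' S) :=
  measurable_res F (Set.Finite.measurableSet (Set.toFinite S))

lemma measure_res_singleton (μ : Measure (ℤ → Bool)) (q : ℤ → ℝ)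
    (hμ : IsProductMeasure μ q) (F : Finset ℤ) (σ : F → Bool) :
    μ (res F ⁻¹' {σ}) = ∏ i : F, ENNReal.ofReal (wt q i (σ i)) := by
  classical
  set b : ℤ → Bool := fun j => if h : j ∈ F then σ ⟨j, h⟩ else false with hb
  have hset : res F ⁻¹' {σ} = {w | ∀ i ∈ F, w i = b i} := by
    ext w
    simp only [Set.mem_preimage, Set.mem_singleton_iff, Set.mem_setOf_eq, funext_iff, res, hb]
    constructor
    · intro h i hi; rw [dif_pos hi]; exact h ⟨i, hi⟩
    · intro h i; have := h i i.2; rwa [dif_pos i.2] at this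
  rw [hset, hμ F b]
  have : ∀ i : F, σ i = b (i : ℤ) := fun i => by simp [hb, dif_pos i.2]
  calc ∏ i ∈ F, ENNReal.ofReal (if b i = false then q i else 1 - q i)
      = ∏ i : F, ENNReal.ofReal (if b (i:ℤ) = false then q i else 1 - q i) :=
        (Finset.prod_coe_sort F _).symm
    _ = ∏ i : F, ENNReal.ofReal (wt q i (σ i)) := by
        refine Finset.prod_congr rfl fun i _ => ?_
        rw [this i]; rfl

lemma measure_res_preimage (μ : Measure (ℤ → Bool)) (q : ℤ → ℝ)
    (hμ : IsProductMeasure μ q) (hq : ∀ i v, 0 ≤ wt q i v)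
    (F : Finset ℤ) (S : Finset (F → Bool)) :
    μ (res F ⁻¹' ↑S) = ENNReal.ofReal (∑ σ ∈ S, ∏ i : F, wt q i (σ i)) := by
  classical
  have hset : res F ⁻¹' ↑S = ⋃ σ ∈ S, res F ⁻¹' {σ} := by
    ext w; simp [res]
  have hd : (↑S : Set (F → Bool)).PairwiseDisjoint (fun σ => res F ⁻¹' {σ}) := by
    intro σ _ τ _ hστ
    exact Disjoint.preimage _ (Set.disjoint_singleton.2 hστ)
  rw [hset, measure_biUnion_finset hd fun σ _ => measurableSet_res_preimage F {σ}]
  calc ∑ σ ∈ S, μ (res F ⁻¹' {σ})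
      = ∑ σ ∈ S, ENNReal.ofReal (∏ i : F, wt q i (σ i)) := Finset.sum_congr rfl fun σ _ => by
        rw [measure_res_singleton μ q hμ F σ, ← ENNReal.ofReal_prod_of_nonneg fun i _ => hq _ _]
    _ = ENNReal.ofReal (∑ σ ∈ S, ∏ i : F, wt q i (σ i)) :=
        (ENNReal.ofReal_sum_of_nonneg fun σ _ => Finset.prod_nonneg fun i _ => hq _ _).symm

/-- the Hellinger affinity of one coordinate -/
noncomputable def rho (p : ℤ → ℝ) (pl : ℝ) (k : ℤ) : ℝ :=
  Real.sqrt (p k * pl) + Real.sqrt ((1 - p k) * (1 - pl))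

variable {p : ℤ → ℝ} {pl : ℝ}

lemma rho_pos (hp : ∀ k, p k ∈ Set.Ioo (0:ℝ) 1) (hpl : pl ∈ Set.Icc (0:ℝ) 1) (k : ℤ) :
    0 < rho p pl k := by
  obtain ⟨hp0, hp1⟩ := hp k
  obtain ⟨h0, h1⟩ := hpl
  rcases eq_or_lt_of_le h0 with h | h
  · have : 0 < Real.sqrt ((1 - p k) * (1 - pl)) := by
      apply Real.sqrt_pos.2; nlinarith
    have := Real.sqrt_nonneg (p k * pl)
    unfold rho; linarith
  · have : 0 < Real.sqrt (p k * pl) := Real.sqrt_pos.2 (by positivity)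
    have := Real.sqrt_nonneg ((1 - p k) * (1 - pl))
    unfold rho; linarith

lemma rho_le_one (hp : ∀ k, p k ∈ Set.Ioo (0:ℝ) 1) (hpl : pl ∈ Set.Icc (0:ℝ) 1) (k : ℤ) :
    rho p pl k ≤ 1 := by
  obtain ⟨hp0, hp1⟩ := hp k
  obtain ⟨h0, h1⟩ := hpl
  unfold rho
  rw [Real.sqrt_mul (le_of_lt hp0), Real.sqrt_mul (by linarith)]
  set s := Real.sqrt (p k); set t := Real.sqrt pl
  set u := Real.sqrt (1 - p k); set v := Real.sqrt (1 - pl)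
  have hs : s^2 = p k := Real.sq_sqrt (le_of_lt hp0)
  have ht : t^2 = pl := Real.sq_sqrt h0
  have hu : u^2 = 1 - p k := Real.sq_sqrt (by linarith)
  have hv : v^2 = 1 - pl := Real.sq_sqrt (by linarith)
  have hs0 : 0 ≤ s := Real.sqrt_nonneg _
  have ht0 : 0 ≤ t := Real.sqrt_nonneg _
  have hu0 : 0 ≤ u := Real.sqrt_nonneg _
  have hv0 : 0 ≤ v := Real.sqrt_nonneg _
  nlinarith [sq_nonneg (s*v - u*t), sq_nonneg (s*t + u*v - 1), sq_nonneg (s*t + u*v)]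

lemma f_eq_rho (hp : ∀ k, p k ∈ Set.Ioo (0:ℝ) 1) (hpl : pl ∈ Set.Icc (0:ℝ) 1) (k : ℤ) :
    f p pl k = 2 - 2 * rho p pl k := by
  obtain ⟨hp0, hp1⟩ := hp k
  obtain ⟨h0, h1⟩ := hpl
  unfold f rho
  rw [Real.sqrt_mul (le_of_lt hp0), Real.sqrt_mul (by linarith : (0:ℝ) ≤ 1 - p k)]
  have hs : Real.sqrt (p k)^2 = p k := Real.sq_sqrt (le_of_lt hp0)
  have ht : Real.sqrt pl^2 = pl := Real.sq_sqrt h0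
  have hu : Real.sqrt (1 - p k)^2 = 1 - p k := Real.sq_sqrt (by linarith)
  have hv : Real.sqrt (1 - pl)^2 = 1 - pl := Real.sq_sqrt (by linarith)
  nlinarith [hs, ht, hu, hv]

lemma exp_bound {x : ℝ} (hx : 1/2 ≤ x) (hx1 : x ≤ 1) : Real.exp (-2*(1-x)) ≤ x := by
  have h1 : 3 - 2*x ≤ Real.exp (2*(1-x)) := by
    have := Real.add_one_le_exp (2*(1-x)); linarith
  have h2 : Real.exp (-2*(1-x)) * Real.exp (2*(1-x)) = 1 := by
    rw [← Real.exp_add]; norm_num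
  have h3 := Real.exp_pos (-2*(1-x))
  have h4 := Real.exp_pos (2*(1-x))
  nlinarith [mul_nonneg (by linarith : (0:ℝ) ≤ 2*x-1) (by linarith : (0:ℝ) ≤ 1-x),
    mul_le_mul_of_nonneg_left h1 (by linarith : (0:ℝ) ≤ x)]

/-- a uniform positive lower bound for all finite products of the `rho`'s -/
lemma exists_C (hp : ∀ k, p k ∈ Set.Ioo (0:ℝ) 1) (hpl : pl ∈ Set.Icc (0:ℝ) 1)
    (hS : Summable (f p pl)) :
    ∃ C : ℝ, 0 < C ∧ ∀ F : Finset ℤ, C ≤ ∏ k ∈ F, rho p pl k := by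
  classical
  have h1 : Summable (fun k => 1 - rho p pl k) := by
    refine ((hS.div_const 2).congr fun k => ?_)
    rw [f_eq_rho hp hpl]; ring
  have hnn : ∀ k, 0 ≤ 1 - rho p pl k := fun k => by linarith [rho_le_one hp hpl k]
  set T := ∑' k, (1 - rho p pl k) with hT
  have hpart : ∀ F : Finset ℤ, ∑ k ∈ F, (1 - rho p pl k) ≤ T :=
    fun F => Summable.sum_le_tsum F (fun k _ => hnn k) h1
  have hfin : {k : ℤ | 1/2 ≤ 1 - rho p pl k}.Finite := by
    have := h1.tendsto_cofinite_zero
    have hev := this.eventually (eventually_lt_nhds (by norm_num : (0:ℝ) < 1/2))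
    have := Filter.eventually_cofinite.1 hev
    exact this.subset fun k hk => by simp only [Set.mem_setOf_eq] at *; linarith
  set G : Finset ℤ := hfin.toFinset with hG
  refine ⟨(∏ k ∈ G, rho p pl k) * Real.exp (-2 * T), ?_, ?_⟩
  · exact mul_pos (Finset.prod_pos fun k _ => rho_pos hp hpl k) (Real.exp_pos _)
  · intro F
    rw [← Finset.prod_filter_mul_prod_filter_not F (· ∈ G) (rho p pl)]
    have hA : ∏ k ∈ G, rho p pl k ≤ ∏ k ∈ F.filter (· ∈ G), rho p pl k := by
      have hsub : F.filter (· ∈ G) ⊆ G := fun k hk => (Finset.mem_filter.1 hk).2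
      rw [← Finset.prod_sdiff hsub]
      have hle1 : ∏ k ∈ G \ F.filter (· ∈ G), rho p pl k ≤ 1 :=
        Finset.prod_le_one (fun k _ => le_of_lt (rho_pos hp hpl k))
          (fun k _ => rho_le_one hp hpl k)
      have hpos : 0 ≤ ∏ k ∈ F.filter (· ∈ G), rho p pl k :=
        Finset.prod_nonneg fun k _ => le_of_lt (rho_pos hp hpl k)
      nlinarith
    have hB : Real.exp (-2 * T) ≤ ∏ k ∈ F.filter (· ∉ G), rho p pl k := by
      have hstep : ∀ k ∈ F.filter (· ∉ G), Real.exp (-2*(1 - rho p pl k)) ≤ rho p pl k := by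
        intro k hk
        have hkG : k ∉ G := (Finset.mem_filter.1 hk).2
        rw [hG, Set.Finite.mem_toFinset] at hkG
        simp only [Set.mem_setOf_eq, not_le] at hkG
        exact exp_bound (by linarith) (rho_le_one hp hpl k)
      calc Real.exp (-2 * T) ≤ Real.exp (-2 * ∑ k ∈ F.filter (· ∉ G), (1 - rho p pl k)) := by
            apply Real.exp_le_exp.2
            have := hpart (F.filter (· ∉ G)); nlinarith
        _ = ∏ k ∈ F.filter (· ∉ G), Real.exp (-2*(1 - rho p pl k)) := by
            rw [← Real.exp_sum, Finset.mul_sum]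
        _ ≤ ∏ k ∈ F.filter (· ∉ G), rho p pl k :=
            Finset.prod_le_prod (fun k _ => (Real.exp_pos _).le) hstep
    exact mul_le_mul hA hB (Real.exp_pos _).le
      (Finset.prod_nonneg fun k _ => (rho_pos hp hpl k).le)

lemma sqrt_prod {ι : Type*} (s : Finset ι) (g : ι → ℝ) (hg : ∀ i ∈ s, 0 ≤ g i) :
    Real.sqrt (∏ i ∈ s, g i) = ∏ i ∈ s, Real.sqrt (g i) := by
  classical
  induction s using Finset.induction_on with
  | empty => simp
  | @insert a s' hx ih =>
    rw [Finset.prod_insert hx, Finset.prod_insert hx,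
      Real.sqrt_mul (hg a (Finset.mem_insert_self a s')),
      ih fun i hi => hg i (Finset.mem_insert_of_mem hi)]

/-- The fundamental Cauchy–Schwarz bound on cylinder-algebra sets. -/
lemma key_bound (hp : ∀ k, p k ∈ Set.Ioo (0:ℝ) 1) (hpl : pl ∈ Set.Icc (0:ℝ) 1)
    (P Q : Measure (ℤ → Bool)) (hP : IsProductMeasure P p)
    (hQ : IsProductMeasure Q (fun _ => pl))
    (F : Finset ℤ) (S : Finset (F → Bool)) :
    ∏ k ∈ F, rho p pl k ≤
      Real.sqrt ((P (res F ⁻¹' ↑S)).toReal * (Q (res F ⁻¹' ↑S)).toReal) +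
      Real.sqrt ((P ((res F ⁻¹' ↑S)ᶜ)).toReal * (Q ((res F ⁻¹' ↑S)ᶜ)).toReal) := by
  classical
  have hwp : ∀ i v, 0 ≤ wt p i v := by
    intro i v
    obtain ⟨h0, h1⟩ := hp i
    unfold wt; cases v <;> simp <;> linarith
  have hwq : ∀ i v, 0 ≤ wt (fun _ => pl) i v := by
    intro i v
    obtain ⟨h0, h1⟩ := hpl
    unfold wt; cases v <;> simp <;> linarith
  set x : (F → Bool) → ℝ := fun σ => ∏ i : F, wt p i (σ i) with hxdef
  set y : (F → Bool) → ℝ := fun σ => ∏ i : F, wt (fun _ => pl) i (σ i) with hydef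
  have hx : ∀ σ, 0 ≤ x σ := fun σ => Finset.prod_nonneg fun i _ => hwp _ _
  have hy : ∀ σ, 0 ≤ y σ := fun σ => Finset.prod_nonneg fun i _ => hwq _ _
  have hcompl : (res F ⁻¹' ↑S)ᶜ = res F ⁻¹' ↑(Sᶜ) := by
    rw [← Set.preimage_compl, Finset.coe_compl]
  have hPA : (P (res F ⁻¹' ↑S)).toReal = ∑ σ ∈ S, x σ := by
    rw [measure_res_preimage P p hP hwp F S,
      ENNReal.toReal_ofReal (Finset.sum_nonneg fun σ _ => hx σ)]
  have hQA : (Q (res F ⁻¹' ↑S)).toReal = ∑ σ ∈ S, y σ := by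
    rw [measure_res_preimage Q _ hQ hwq F S,
      ENNReal.toReal_ofReal (Finset.sum_nonneg fun σ _ => hy σ)]
  have hPAc : (P ((res F ⁻¹' ↑S)ᶜ)).toReal = ∑ σ ∈ Sᶜ, x σ := by
    rw [hcompl, measure_res_preimage P p hP hwp F Sᶜ,
      ENNReal.toReal_ofReal (Finset.sum_nonneg fun σ _ => hx σ)]
  have hQAc : (Q ((res F ⁻¹' ↑S)ᶜ)).toReal = ∑ σ ∈ Sᶜ, y σ := by
    rw [hcompl, measure_res_preimage Q _ hQ hwq F Sᶜ,
      ENNReal.toReal_ofReal (Finset.sum_nonneg fun σ _ => hy σ)]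
  have hprod : ∏ k ∈ F, rho p pl k = ∑ σ : F → Bool, Real.sqrt (x σ * y σ) := by
    have h1 : ∀ σ : F → Bool, Real.sqrt (x σ * y σ) =
        ∏ i : F, Real.sqrt (wt p i (σ i) * wt (fun _ => pl) i (σ i)) := by
      intro σ
      rw [hxdef, hydef]
      rw [← Finset.prod_mul_distrib, sqrt_prod _ _ (fun i _ => mul_nonneg (hwp _ _) (hwq _ _))]
    calc ∏ k ∈ F, rho p pl k
        = ∏ i : F, rho p pl i := (Finset.prod_coe_sort F _).symm
      _ = ∏ i : F, ∑ v : Bool, Real.sqrt (wt p i v * wt (fun _ => pl) i v) := by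
          refine Finset.prod_congr rfl fun i _ => ?_
          rw [Fintype.sum_bool]
          unfold rho wt
          simp only [if_pos, if_neg]
          norm_num
          ring
      _ = ∑ σ : F → Bool, ∏ i : F, Real.sqrt (wt p i (σ i) * wt (fun _ => pl) i (σ i)) :=
          Fintype.prod_sum _
      _ = ∑ σ : F → Bool, Real.sqrt (x σ * y σ) := by
          exact Finset.sum_congr rfl fun σ _ => (h1 σ).symm
  rw [hprod, ← Finset.sum_add_sum_compl S (fun σ => Real.sqrt (x σ * y σ))]
  have hCS : ∀ T : Finset (F → Bool), ∑ σ ∈ T, Real.sqrt (x σ * y σ) ≤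
      Real.sqrt ((∑ σ ∈ T, x σ) * (∑ σ ∈ T, y σ)) := by
    intro T
    have h1 : ∀ σ, Real.sqrt (x σ * y σ) = Real.sqrt (x σ) * Real.sqrt (y σ) :=
      fun σ => Real.sqrt_mul (hx σ) _
    simp_rw [h1]
    rw [Real.sqrt_mul (Finset.sum_nonneg fun σ _ => hx σ)]
    exact Real.sum_sqrt_mul_sqrt_le T hx hy
  rw [hPA, hQA, hPAc, hQAc]
  exact add_le_add (hCS S) (hCS Sᶜ)

/-- the algebra of sets depending on finitely many coordinates -/
def Alg : Set (Set (ℤ → Bool)) :=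
  {A | ∃ (F : Finset ℤ) (S : Finset (F → Bool)), A = res F ⁻¹' ↑S}

lemma res_mono {F F' : Finset ℤ} (h : F ⊆ F') (S : Finset (F → Bool)) :
    ∃ S' : Finset (F' → Bool), res F ⁻¹' ↑S = res F' ⁻¹' ↑S' := by
  classical
  refine ⟨Finset.univ.filter (fun σ => (fun i : F => σ ⟨i.1, h i.2⟩) ∈ S), ?_⟩
  ext w
  simp only [Set.mem_preimage, Finset.coe_filter, Finset.mem_univ, true_and,
    Set.mem_setOf_eq, Finset.mem_coe, res]
  rfl

lemma isSetAlgebra_Alg : IsSetAlgebra Alg where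
  empty_mem := ⟨∅, ∅, by simp⟩
  compl_mem := by
    rintro A ⟨F, S, rfl⟩
    exact ⟨F, Sᶜ, by rw [← Set.preimage_compl, Finset.coe_compl]⟩
  union_mem := by
    rintro A B ⟨F₁, S₁, rfl⟩ ⟨F₂, S₂, rfl⟩
    obtain ⟨S₁', h₁⟩ := res_mono (Finset.subset_union_left (s₂ := F₂)) S₁
    obtain ⟨S₂', h₂⟩ := res_mono (Finset.subset_union_right (s₁ := F₁)) S₂
    refine ⟨F₁ ∪ F₂, S₁' ∪ S₂', ?_⟩
    rw [h₁, h₂, Finset.coe_union, Set.preimage_union]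

lemma gen_Alg : (inferInstance : MeasurableSpace (ℤ → Bool)) =
    MeasurableSpace.generateFrom Alg := by
  classical
  apply le_antisymm
  · rw [show (inferInstance : MeasurableSpace (ℤ → Bool)) = MeasurableSpace.pi from rfl,
      MeasurableSpace.pi_eq_generateFrom_projections]
    apply MeasurableSpace.generateFrom_le
    rintro B ⟨i, s, -, rfl⟩
    apply MeasurableSpace.measurableSet_generateFrom
    refine ⟨{i}, Finset.univ.filter (fun σ => σ ⟨i, Finset.mem_singleton_self i⟩ ∈ s), ?_⟩
    ext w
    simp [res]
  · apply MeasurableSpace.generateFrom_le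
    rintro A ⟨F, S, rfl⟩
    exact measurableSet_res_preimage F ↑S

/-- Part B: a product measure at positive Hellinger distance from the iid measure cannot be
mutually singular with it when the coordinatewise Hellinger sum converges. -/
lemma partB (hp : ∀ k, p k ∈ Set.Ioo (0:ℝ) 1) (hpl : pl ∈ Set.Icc (0:ℝ) 1)
    (P Q : Measure (ℤ → Bool)) [IsProbabilityMeasure P] [IsProbabilityMeasure Q]
    (hP : IsProductMeasure P p) (hQ : IsProductMeasure Q (fun _ => pl))
    (hS : Summable (f p pl)) (hsing : P ⟂ₘ Q) : False := by
  classical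
  obtain ⟨C, hC, hCle⟩ := exists_C hp hpl hS
  obtain ⟨s, hsm, hPs, hQs⟩ := hsing
  set ε : ℝ := C^2/16 with hε
  have hεpos : 0 < ε := by positivity
  have hdense : (P + Q).MeasureDense Alg :=
    Measure.MeasureDense.of_generateFrom_isSetAlgebra_finite (P + Q) isSetAlgebra_Alg gen_Alg
  obtain ⟨t, htA, hterr⟩ := hdense.approx s hsm (measure_ne_top _ _) ε hεpos
  have hPerr : P (symmDiff s t) < ENNReal.ofReal ε := by
    refine lt_of_le_of_lt ?_ hterr
    rw [Measure.add_apply]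
    exact le_self_add
  have hQerr : Q (symmDiff s t) < ENNReal.ofReal ε := by
    refine lt_of_le_of_lt ?_ hterr
    rw [Measure.add_apply]
    exact le_add_self
  -- P t and Q tᶜ are small
  have hsub1 : t ⊆ s ∪ (symmDiff s t) := by
    intro w hw
    by_cases hws : w ∈ s
    · exact Or.inl hws
    · exact Or.inr (Set.mem_symmDiff.2 (Or.inr ⟨hw, hws⟩))
  have hsub2 : tᶜ ⊆ sᶜ ∪ (symmDiff s t) := by
    intro w hw
    by_cases hws : w ∈ s
    · exact Or.inr (Set.mem_symmDiff.2 (Or.inl ⟨hws, hw⟩))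
    · exact Or.inl hws
  have hPt : P t ≤ ENNReal.ofReal ε := by
    calc P t ≤ P (s ∪ symmDiff s t) := measure_mono hsub1
      _ ≤ P s + P (symmDiff s t) := measure_union_le _ _
      _ ≤ ENNReal.ofReal ε := by rw [hPs, zero_add]; exact hPerr.le
  have hQtc : Q tᶜ ≤ ENNReal.ofReal ε := by
    calc Q tᶜ ≤ Q (sᶜ ∪ symmDiff s t) := measure_mono hsub2
      _ ≤ Q sᶜ + Q (symmDiff s t) := measure_union_le _ _
      _ ≤ ENNReal.ofReal ε := by rw [hQs, zero_add]; exact hQerr.le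
  obtain ⟨F, S, rfl⟩ := htA
  -- go to real numbers
  have h1 : (P (res F ⁻¹' ↑S)).toReal ≤ ε :=
    ENNReal.toReal_le_of_le_ofReal hεpos.le hPt
  have h2 : (Q ((res F ⁻¹' ↑S)ᶜ)).toReal ≤ ε :=
    ENNReal.toReal_le_of_le_ofReal hεpos.le hQtc
  have h3 : (Q (res F ⁻¹' ↑S)).toReal ≤ 1 := by
    refine ENNReal.toReal_le_of_le_ofReal zero_le_one ?_
    simpa using prob_le_one (μ := Q) (s := res F ⁻¹' ↑S)
  have h4 : (P ((res F ⁻¹' ↑S)ᶜ)).toReal ≤ 1 := by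
    refine ENNReal.toReal_le_of_le_ofReal zero_le_one ?_
    simpa using prob_le_one (μ := P) (s := (res F ⁻¹' ↑S)ᶜ)
  have hkey := key_bound hp hpl P Q hP hQ F S
  have hCF := hCle F
  have hsqε : Real.sqrt ε = C/4 := by
    rw [hε, show C^2/16 = (C/4)^2 by ring, Real.sqrt_sq (by positivity)]
  have hb1 : Real.sqrt ((P (res F ⁻¹' ↑S)).toReal * (Q (res F ⁻¹' ↑S)).toReal) ≤ C/4 := by
    rw [← hsqε]
    apply Real.sqrt_le_sqrt
    calc (P (res F ⁻¹' ↑S)).toReal * (Q (res F ⁻¹' ↑S)).toReal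
        ≤ ε * 1 := mul_le_mul h1 h3 ENNReal.toReal_nonneg hεpos.le
      _ = ε := mul_one ε
  have hb2 : Real.sqrt ((P ((res F ⁻¹' ↑S)ᶜ)).toReal * (Q ((res F ⁻¹' ↑S)ᶜ)).toReal) ≤ C/4 := by
    rw [← hsqε]
    apply Real.sqrt_le_sqrt
    calc (P ((res F ⁻¹' ↑S)ᶜ)).toReal * (Q ((res F ⁻¹' ↑S)ᶜ)).toReal
        ≤ 1 * ε := mul_le_mul h4 h2 ENNReal.toReal_nonneg zero_le_one
      _ = ε := one_mul ε
  linarith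

end ZTAux

theorem zero_type_of_singular_to_limit (p : ℤ → ℝ) (pl : ℝ)
    (hp : ∀ k, p k ∈ Set.Ioo (0 : ℝ) 1)
    (P Q : Measure (ℤ → Bool)) [IsProbabilityMeasure P] [IsProbabilityMeasure Q]
    (hP : IsProductMeasure P p)
    -- `P` is non-singular for the shift: `d(P, P ∘ T) < ∞`
    (hns : Summable (fun k : ℤ =>
        (Real.sqrt (p k) - Real.sqrt (p (k - 1))) ^ 2 +
        (Real.sqrt (1 - p k) - Real.sqrt (1 - p (k - 1))) ^ 2))
    -- the marginals converge at `-∞` to `(pl, 1 - pl)`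
    (hlim : Tendsto p atBot (nhds pl))
    -- `Q` is the i.i.d. `(pl, 1 - pl)` product measure
    (hQ : IsProductMeasure Q (fun _ => pl))
    (hsing : P ⟂ₘ Q) :
    Tendsto (fun n : ℕ => dShift p n) atTop (nhds ⊤) := by
  classical
  by_cases htop : (∑' k : ℤ, ENNReal.ofReal (ZTAux.f p pl k)) = ⊤
  · exact ZTAux.partA p pl htop hlim
  · exfalso
    have hpl : pl ∈ Set.Icc (0:ℝ) 1 := by
      have hev : ∀ᶠ k in atBot, p k ∈ Set.Icc (0:ℝ) 1 :=
        Filter.Eventually.of_forall fun k => ⟨(hp k).1.le, (hp k).2.le⟩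
      exact isClosed_Icc.mem_of_tendsto hlim hev
    have hsum : Summable (ZTAux.f p pl) := by
      have h1 : (∑' k : ℤ, (((ZTAux.f p pl k).toNNReal : NNReal) : ENNReal)) ≠ ⊤ := by
        convert htop using 3
        rfl
      have h2 := ENNReal.tsum_coe_ne_top_iff_summable.1 h1
      exact (NNReal.summable_coe.2 h2).congr fun k =>
        Real.coe_toNNReal _ (ZTAux.f_nonneg p pl k)
    exact ZTAux.partB hp hpl P Q hP hQ hsum hsing
end

section
/- Let P = ∏_{k∈ℤ} P_k be a non-singular product measure on {0,1}^ℤ such that liminf_{k→−∞} P_k({0}) ≠ limsup_{k→−∞} P_k({0}). Then d(P, P∘T^n) → ∞ as n → ∞, i.e., the shift is NS zero-type. -/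
open MeasureTheory Filter

open Topology

lemma tendsto_cofinite_zero_of_sq_summable {f : ℤ → ℝ} (h : Summable (fun k => f k ^ 2)) :
    Tendsto f cofinite (𝓝 0) := by
  have h2 : Tendsto (fun k => f k ^ 2) cofinite (𝓝 0) := h.tendsto_cofinite_zero
  rw [tendsto_zero_iff_abs_tendsto_zero]
  have := (Real.continuous_sqrt.tendsto' 0 0 (by simp)).comp h2
  simpa [Function.comp_def, Real.sqrt_sq_eq_abs] using this

lemma atBot_le_cofinite_int : (atBot : Filter ℤ) ≤ cofinite := by
  rw [Int.cofinite_eq]; exact le_sup_left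

theorem zero_type_of_oscillating_marginals (p : ℤ → ℝ)
    (hp : ∀ k, p k ∈ Set.Ioo (0 : ℝ) 1)
    (P : Measure (ℤ → Bool)) [IsProbabilityMeasure P]
    (hP : IsProductMeasure P p)
    -- `P` is non-singular for the shift: `d(P, P ∘ T) < ∞`
    (hns : Summable (fun k : ℤ =>
        (Real.sqrt (p k) - Real.sqrt (p (k - 1))) ^ 2 +
        (Real.sqrt (1 - p k) - Real.sqrt (1 - p (k - 1))) ^ 2))
    (hosc : liminf p atBot ≠ limsup p atBot) :
    Tendsto (fun n : ℕ => dShift p n) atTop (nhds ⊤) := by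
  classical
  set x : ℤ → ℝ := fun k => Real.sqrt (p k) with hxdef
  set e : ℤ → ℝ := fun k => x k - x (k - 1) with hedef
  have hx0 : ∀ k, 0 ≤ x k := fun k => Real.sqrt_nonneg _
  have hx1 : ∀ k, x k ≤ 1 := fun k => Real.sqrt_le_one.mpr (hp k).2.le
  have he : Summable (fun k => e k ^ 2) := by
    refine hns.of_nonneg_of_le (fun k => sq_nonneg _) (fun k => ?_)
    have h2 : (0:ℝ) ≤ (Real.sqrt (1 - p k) - Real.sqrt (1 - p (k - 1))) ^ 2 := sq_nonneg _
    simp only [hedef, hxdef]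
    linarith
  -- telescoping
  have htel : ∀ (n : ℕ) (k : ℤ), x k - x (k - (n:ℤ)) = ∑ i ∈ Finset.range n, e (k - (i:ℤ)) := by
    intro n
    induction n with
    | zero => intro k; simp
    | succ n ih =>
      intro k
      rw [Finset.sum_range_succ, ← ih k]
      have h1 : k - ((n:ℕ)+1 : ℤ) = (k - (n:ℤ)) - 1 := by ring
      push_cast
      rw [h1]
      simp only [hedef]
      ring
  -- summability of each term
  have hsummable : ∀ n : ℕ, Summable (fun k : ℤ => (x k - x (k - (n:ℤ)))^2) := by
    intro n
    have hterm : Summable (fun k : ℤ => (n:ℝ) * ∑ i ∈ Finset.range n, e (k - (i:ℤ))^2) := by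
      apply Summable.mul_left
      apply summable_sum
      intro i _
      have := (Equiv.subRight (i:ℤ)).summable_iff.mpr he
      simpa [Function.comp_def, Equiv.subRight] using this
    refine hterm.of_nonneg_of_le (fun k => sq_nonneg _) (fun k => ?_)
    rw [htel n k]
    calc (∑ i ∈ Finset.range n, e (k - (i:ℤ)))^2
        ≤ (Finset.range n).card * ∑ i ∈ Finset.range n, e (k-(i:ℤ))^2 :=
          sq_sum_le_card_mul_sum_sq
      _ = (n:ℝ) * ∑ i ∈ Finset.range n, e (k-(i:ℤ))^2 := by simp
  set S : ℕ → ℝ := fun n => ∑' k : ℤ, (x k - x (k - (n:ℤ)))^2 with hSdef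
  have hmain : Tendsto S atTop atTop := by
    by_contra hcon
    rw [tendsto_atTop] at hcon
    push_neg at hcon
    obtain ⟨C, hC⟩ := hcon
    obtain ⟨φ, hφ, hφC⟩ := extraction_of_frequently_atTop hC
    have hcpt : IsCompact (Set.pi Set.univ (fun _ : ℤ => Set.Icc (-1:ℝ) 1)) :=
      isCompact_univ_pi (fun _ => isCompact_Icc)
    set v : ℕ → (ℤ → ℝ) := fun i k => x k - x (k - (φ i : ℤ)) with hvdef
    have hvmem : ∀ i, v i ∈ Set.pi Set.univ (fun _ : ℤ => Set.Icc (-1:ℝ) 1) := by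
      intro i k _
      constructor
      · have := hx1 k; have := hx0 (k - (φ i:ℤ)); have := hx1 (k - (φ i:ℤ)); have := hx0 k
        simp only [hvdef]; linarith
      · have := hx1 k; have := hx0 (k - (φ i:ℤ)); have := hx1 (k - (φ i:ℤ)); have := hx0 k
        simp only [hvdef]; linarith
    obtain ⟨u, -, ψ, hψ, hlim⟩ := hcpt.tendsto_subseq hvmem
    rw [tendsto_pi_nhds] at hlim
    -- k - φ(ψ i) tendsto cofinite
    have hkmn : ∀ k : ℤ, Tendsto (fun i => k - (φ (ψ i) : ℤ)) atTop (cofinite : Filter ℤ) := by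
      intro k
      have h1 : Tendsto (fun i => (φ (ψ i) : ℤ)) atTop atTop :=
        tendsto_natCast_atTop_atTop.comp ((hφ.comp hψ).tendsto_atTop)
      have h2 : Tendsto (fun i => -(φ (ψ i) : ℤ) + k) atTop atBot :=
        tendsto_atBot_add_const_right _ k (tendsto_neg_atTop_atBot.comp h1)
      have h3 : Tendsto (fun i => k - (φ (ψ i) : ℤ)) atTop atBot := by
        refine h2.congr (fun i => by ring)
      exact h3.mono_right atBot_le_cofinite_int
    have hecof : Tendsto e cofinite (𝓝 0) := tendsto_cofinite_zero_of_sq_summable he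
    -- (a) u has the same differences as x
    have hudiff : ∀ k : ℤ, u k - u (k - 1) = e k := by
      intro k
      have l1 : Tendsto (fun i => v (ψ i) k - v (ψ i) (k - 1)) atTop (𝓝 (u k - u (k-1))) :=
        (hlim k).sub (hlim (k-1))
      have l2 : Tendsto (fun i => e k - e (k - (φ (ψ i):ℤ))) atTop (𝓝 (e k - 0)) :=
        tendsto_const_nhds.sub (hecof.comp (hkmn k))
      have heq : (fun i => v (ψ i) k - v (ψ i) (k-1)) = fun i => e k - e (k - (φ (ψ i):ℤ)) := by
        funext i
        have h1 : (k-1) - (φ (ψ i):ℤ) = (k - (φ (ψ i):ℤ)) - 1 := by ring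
        simp only [hvdef, hedef, h1]
        ring
      rw [heq] at l1
      simpa using tendsto_nhds_unique l1 l2
    -- (b) x - u constant
    have hgconst : ∀ k : ℤ, x k - u k = x 0 - u 0 := by
      intro k
      induction k using Int.induction_on with
      | zero => rfl
      | succ n ih =>
        have h1 := hudiff ((n:ℤ)+1)
        simp only [add_sub_cancel_right] at h1
        have h2 : e ((n:ℤ)+1) = x ((n:ℤ)+1) - x (((n:ℤ)+1) - 1) := rfl
        simp only [add_sub_cancel_right] at h2
        linarith [h1, h2, ih]
      | pred n ih =>
        have h1 := hudiff (-(n:ℤ))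
        have h2 : e (-(n:ℤ)) = x (-(n:ℤ)) - x ((-(n:ℤ)) - 1) := rfl
        have h3 : (-(n:ℤ)) - 1 = -(n:ℤ) - 1 := rfl
        linarith [h1, h2, ih]
    -- (c) u square-summable
    have husum : Summable (fun k : ℤ => u k ^ 2) := by
      refine summable_of_sum_le (c := C) (fun k => sq_nonneg _) (fun F => ?_)
      have hev : Tendsto (fun i => ∑ k ∈ F, (v (ψ i) k)^2) atTop (𝓝 (∑ k ∈ F, (u k)^2)) :=
        tendsto_finset_sum _ (fun k _ => (hlim k).pow 2)
      refine le_of_tendsto hev (Eventually.of_forall (fun i => ?_))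
      calc ∑ k ∈ F, v (ψ i) k ^ 2
          ≤ S (φ (ψ i)) := by
            refine Summable.sum_le_tsum F (fun k _ => sq_nonneg _) (hsummable (φ (ψ i)))
        _ ≤ C := (hφC (ψ i)).le
    have hu0 : Tendsto u atBot (𝓝 0) :=
      (tendsto_cofinite_zero_of_sq_summable husum).mono_left atBot_le_cofinite_int
    have hxlim : Tendsto x atBot (𝓝 (x 0 - u 0)) := by
      have h1 : Tendsto (fun k => u k + (x 0 - u 0)) atBot (𝓝 (0 + (x 0 - u 0))) :=
        hu0.add_const _
      have h2 : Tendsto x atBot (𝓝 (0 + (x 0 - u 0))) :=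
        h1.congr (fun k => by linarith [hgconst k])
      simpa using h2
    have hplim : Tendsto p atBot (𝓝 ((x 0 - u 0)^2)) := by
      refine (hxlim.pow 2).congr (fun k => ?_)
      simp only [hxdef]
      exact Real.sq_sqrt (hp k).1.le
    exact hosc (by rw [hplim.liminf_eq, hplim.limsup_eq])
  -- conclude
  have hdS : ∀ n : ℕ, ENNReal.ofReal (S n) ≤ dShift p n := by
    intro n
    rw [hSdef, ENNReal.ofReal_tsum_of_nonneg (fun k => sq_nonneg _) (hsummable n)]
    refine ENNReal.tsum_le_tsum (fun k => ENNReal.ofReal_le_ofReal ?_)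
    have h2 : (0:ℝ) ≤ (Real.sqrt (1 - p k) - Real.sqrt (1 - p (k - (n:ℤ)))) ^ 2 := sq_nonneg _
    simp only [hxdef]
    linarith
  rw [ENNReal.tendsto_nhds_top_iff_nnreal]
  intro r
  filter_upwards [hmain.eventually_ge_atTop ((r:ℝ) + 1)] with n hn
  have h1 : (r : ENNReal) < ENNReal.ofReal ((r:ℝ) + 1) := by
    rw [← ENNReal.ofReal_coe_nnreal]
    exact ENNReal.ofReal_lt_ofReal_iff (by positivity) |>.mpr (by linarith [r.coe_nonneg])
  exact h1.trans_le ((ENNReal.ofReal_le_ofReal hn).trans (hdS n))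
end
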